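/- The forcing notion Q, whose conditions are finite functions q with domain a finite subset of ω₁ and range contained in ω^n(q) for some n(q) ∈ ω, with q injective, ordered by: q ≤ p iff dom(q) ⊆ dom(p), q(α) ⊆ p(α) for all α ∈ dom(q), and whenever α < β in dom(q), i < n(q), and q(α) R_i q(β) then p(α) R_i p(β), satisfies the countable chain condition (in fact the Knaster property). -/

import Mathlib

noncomputable def omega1 : Ordinal := (Cardinal.aleph 1).ord

/-- s R_i t iff i < |s| = |t|, s↾i = t↾i, and s(l) = σ_i(t(l)) for l ∈ [i,|s|). -/
def Rrel (σ : ℕ → ℕ → ℕ) (i : ℕ) (s t : List ℕ) : Prop :=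
  i < s.length ∧ s.length = t.length ∧ s.take i = t.take i ∧
    ∀ l, i ≤ l → l < s.length → s.getD l 0 = σ i (t.getD l 0)

/-- A condition of the forcing Q: a finite injective function from ω₁ into
ω^{<ω} all of whose values have the same length `n`. -/
structure QCond (σ : ℕ → ℕ → ℕ) where
  dom : Finset Ordinal
  sub : ∀ α ∈ dom, α < omega1
  n : ℕ
  val : Ordinal → List ℕ
  len : ∀ α ∈ dom, (val α).length = n
  inj : ∀ α ∈ dom, ∀ β ∈ dom, val α = val β → α = β

/-- The order of Q: q ≤ p iff dom(q) ⊆ dom(p), q(α) ⊆ p(α), and the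
R_i-patterns of q are preserved by p. -/
def QLe (σ : ℕ → ℕ → ℕ) (q p : QCond σ) : Prop :=
  q.dom ⊆ p.dom ∧ (∀ α ∈ q.dom, q.val α <+: p.val α) ∧
    ∀ α ∈ q.dom, ∀ β ∈ q.dom, α < β → ∀ i < q.n,
      Rrel σ i (q.val α) (q.val β) → Rrel σ i (p.val α) (p.val β)

theorem Rrel_det {σ : ℕ → ℕ → ℕ} {i : ℕ} {s s' t : List ℕ}
    (h : Rrel σ i s t) (h' : Rrel σ i s' t) (hl : s.length = s'.length) : s = s' := by
  obtain ⟨hi, hlen, htake, hcoord⟩ := h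
  obtain ⟨hi', hlen', htake', hcoord'⟩ := h'
  apply List.ext_getElem hl
  intro l hl1 hl2
  rcases lt_or_ge l i with hli | hli
  · have e1 : (s.take i)[l]'(by simp [hlen]; omega) = s[l] := List.getElem_take ..
    have e2 : (s'.take i)[l]'(by simp [hlen']; omega) = s'[l] := List.getElem_take ..
    rw [← e1, ← e2]
    simp only [htake, htake']
  · have c1 := hcoord l hli hl1
    have c2 := hcoord' l hli hl2
    rw [List.getD_eq_getElem _ _ hl1] at c1
    rw [List.getD_eq_getElem _ _ hl2] at c2
    rw [c1, c2]

theorem Rrel_extend {σ : ℕ → ℕ → ℕ} {i : ℕ} {s t : List ℕ} {a b : ℕ}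
    (h : Rrel σ i s t) (hab : a = σ i b) : Rrel σ i (s ++ [a]) (t ++ [b]) := by
  obtain ⟨hi, hlen, htake, hcoord⟩ := h
  refine ⟨by simp; omega, by simp [hlen], ?_, ?_⟩
  · rw [List.take_append_of_le_length (le_of_lt hi),
      List.take_append_of_le_length (by omega), htake]
  · intro l hil hl
    simp only [List.length_append, List.length_cons, List.length_nil] at hl
    rcases lt_or_ge l s.length with hls | hls
    · rw [List.getD_eq_getElem _ _ (by simp; omega), List.getD_eq_getElem _ _ (by simp; omega),
        List.getElem_append_left hls, List.getElem_append_left (by omega)]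
      have := hcoord l hil hls
      rwa [List.getD_eq_getElem _ _ hls, List.getD_eq_getElem _ _ (by omega)] at this
    · have hle : l = s.length := by omega
      subst hle
      have e1 : (s ++ [a]).getD s.length 0 = a := by
        rw [List.getD_eq_getElem _ _ (by simp), List.getElem_concat_length rfl]
      have e2 : (t ++ [b]).getD t.length 0 = b := by
        rw [List.getD_eq_getElem _ _ (by simp), List.getElem_concat_length rfl]
      rw [e1, hlen, e2]
      exact hab

theorem countable_Iic_of_lt_omega1 {o : Ordinal} (h : o < omega1) : (Set.Iic o).Countable := by
  have h2 : (Set.Iio (Order.succ o)).Countable := by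
    rw [← Set.countable_coe_iff, ← Cardinal.mk_le_aleph0_iff, Ordinal.mk_Iio_ordinal]
    have hc : (Order.succ o).card ≤ Cardinal.aleph0 := by
      rw [Ordinal.card_succ]
      have h3 : o.card < Cardinal.aleph 1 := by rwa [← Cardinal.lt_ord]
      rw [← Cardinal.succ_aleph0, Order.lt_succ_iff] at h3
      calc o.card + 1 ≤ Cardinal.aleph0 + Cardinal.aleph0 :=
            add_le_add h3 Cardinal.one_le_aleph0
        _ = Cardinal.aleph0 := Cardinal.aleph0_add_aleph0
    exact le_trans (Cardinal.lift_le.mpr hc) (le_of_eq Cardinal.lift_aleph0)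
  exact h2.mono (fun x hx => lt_of_le_of_lt hx (Order.lt_succ o))

theorem amalg (σ : ℕ → ℕ → ℕ)
    (hσ : ∀ N : ℕ, ∀ φ : Fin N → Fin N → ℕ,
      ∃ n : Fin N → ℕ, Function.Injective n ∧
        ∀ i j₀ j₁ : Fin N, φ i j₀ = (j₁ : ℕ) → σ i (n j₀) = n j₁)
    (p q : QCond σ) (h1 : p.n = q.n)
    (h2 : ∀ δ, δ ∈ p.dom → δ ∈ q.dom → p.val δ = q.val δ)
    (h3 : ∀ x ∈ q.dom, x ∉ p.dom → ∀ z ∈ p.dom, z < x) :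
    ∃ r : QCond σ, QLe σ p r ∧ QLe σ q r := by
  classical
  set D : Finset Ordinal := p.dom ∪ q.dom with hD
  set ls : List Ordinal := D.sort (· ≤ ·) with hls
  set ix : Ordinal → ℕ := fun x => ls.idxOf x with hix
  have hmem : ∀ x ∈ D, x ∈ ls := fun x hx => (Finset.mem_sort _).mpr hx
  have hixlt : ∀ x ∈ D, ix x < ls.length := fun x hx =>
    List.idxOf_lt_length_iff.mpr (hmem x hx)
  have hixinj : ∀ x ∈ D, ∀ y ∈ D, ix x = ix y → x = y := fun x hx y hy h =>
    (List.idxOf_inj (hmem x hx)).mp h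
  set K : ℕ := ls.length + p.n with hK
  -- the constraint relation
  set Cst : ℕ → ℕ → ℕ → Prop := fun i j₀ j₁ => ∃ x y : Ordinal, ix x = j₁ ∧ ix y = j₀ ∧
    ((x ∈ p.dom ∧ y ∈ p.dom ∧ x < y ∧ Rrel σ i (p.val x) (p.val y)) ∨
     (x ∈ q.dom ∧ y ∈ q.dom ∧ x < y ∧ Rrel σ i (q.val x) (q.val y))) with hCst
  -- functionality
  have hfunc : ∀ i j₀ j₁ j₁', Cst i j₀ j₁ → Cst i j₀ j₁' → j₁ = j₁' := by
    rintro i j₀ j₁ j₁' ⟨x, y, hx1, rfl, hd⟩ ⟨x', y', hx', hy', hd'⟩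
    have hyD : y ∈ D := by
      rcases hd with ⟨_, h, _, _⟩ | ⟨_, h, _, _⟩
      · exact Finset.mem_union_left _ h
      · exact Finset.mem_union_right _ h
    have hy'D : y' ∈ D := by
      rcases hd' with ⟨_, h, _, _⟩ | ⟨_, h, _, _⟩
      · exact Finset.mem_union_left _ h
      · exact Finset.mem_union_right _ h
    have hyy : y' = y := hixinj y' hy'D y hyD hy'
    rw [hyy] at hd'
    -- now show x = x'
    have hxx : x = x' := by
      rcases hd with ⟨hxp, hyp, hxy, hR⟩ | ⟨hxq, hyq, hxy, hR⟩ <;>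
        rcases hd' with ⟨hxp', hyp', hxy', hR'⟩ | ⟨hxq', hyq', hxy', hR'⟩
      · -- both from p
        exact p.inj x hxp x' hxp' (Rrel_det hR hR'
          (by rw [p.len x hxp, p.len x' hxp']))
      · -- p and q : x' < y, y ∈ p.dom, so x' ∈ p.dom
        have hx'p : x' ∈ p.dom := by
          by_contra hc
          exact absurd (h3 x' hxq' hc y hyp) (not_lt.mpr (le_of_lt hxy'))
        have hR'' : Rrel σ i (p.val x') (p.val y) := by
          rwa [h2 x' hx'p hxq', h2 y hyp hyq']
        exact p.inj x hxp x' hx'p (Rrel_det hR hR''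
          (by rw [p.len x hxp, p.len x' hx'p]))
      · -- q and p
        have hxp2 : x ∈ p.dom := by
          by_contra hc
          exact absurd (h3 x hxq hc y hyp') (not_lt.mpr (le_of_lt hxy))
        have hR2 : Rrel σ i (p.val x) (p.val y) := by
          rwa [h2 x hxp2 hxq, h2 y hyp' hyq]
        exact p.inj x hxp2 x' hxp' (Rrel_det hR2 hR'
          (by rw [p.len x hxp2, p.len x' hxp']))
      · -- both from q
        exact q.inj x hxq x' hxq' (Rrel_det hR hR'
          (by rw [q.len x hxq, q.len x' hxq']))
    rw [← hx1, ← hx', hxx]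
  set φ : Fin K → Fin K → ℕ := fun i j₀ =>
    if h : ∃ j₁ : ℕ, Cst i j₀ j₁ then h.choose else K with hφ
  obtain ⟨a, hainj, haσ⟩ := hσ K φ
  set aa : ℕ → ℕ := fun m => if h : m < K then a ⟨m, h⟩ else 0 with haa
  -- key fact
  have hkey : ∀ i x y, i < p.n → x ∈ D → y ∈ D →
      ((x ∈ p.dom ∧ y ∈ p.dom ∧ x < y ∧ Rrel σ i (p.val x) (p.val y)) ∨
       (x ∈ q.dom ∧ y ∈ q.dom ∧ x < y ∧ Rrel σ i (q.val x) (q.val y))) →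
      aa (ix x) = σ i (aa (ix y)) := by
    intro i x y hi hxD hyD hd
    have hxK : ix x < K := lt_of_lt_of_le (hixlt x hxD) (by omega)
    have hyK : ix y < K := lt_of_lt_of_le (hixlt y hyD) (by omega)
    have hiK : i < K := by omega
    have hex : ∃ j₁ : ℕ, Cst i (ix y) j₁ := ⟨ix x, x, y, rfl, rfl, hd⟩
    have hchoose : Cst i (ix y) hex.choose := hex.choose_spec
    have heq : hex.choose = ix x := hfunc i (ix y) hex.choose (ix x) hchoose ⟨x, y, rfl, rfl, hd⟩
    have hφval : φ ⟨i, hiK⟩ ⟨ix y, hyK⟩ = ((⟨ix x, hxK⟩ : Fin K) : ℕ) := by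
      simp only [hφ, dif_pos hex]
      exact heq
    have := haσ ⟨i, hiK⟩ ⟨ix y, hyK⟩ ⟨ix x, hxK⟩ hφval
    simpa [haa, dif_pos hxK, dif_pos hyK] using this.symm
  -- base values
  set base : Ordinal → List ℕ := fun x => if x ∈ p.dom then p.val x else q.val x with hbase
  have hbasep : ∀ x ∈ p.dom, base x = p.val x := fun x hx => if_pos hx
  have hbaseq : ∀ x ∈ q.dom, base x = q.val x := by
    intro x hx
    by_cases hxp : x ∈ p.dom
    · rw [hbase]; simp only [if_pos hxp]; exact h2 x hxp hx
    · exact if_neg hxp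
  have hbaselen : ∀ x ∈ D, (base x).length = p.n := by
    intro x hx
    rcases Finset.mem_union.mp hx with h | h
    · rw [hbasep x h]; exact p.len x h
    · rw [hbaseq x h, q.len x h, h1]
  set rval : Ordinal → List ℕ := fun x => if x ∈ D then base x ++ [aa (ix x)] else [] with hrval
  have hrvalD : ∀ x ∈ D, rval x = base x ++ [aa (ix x)] := fun x hx => if_pos hx
  have hrlen : ∀ x ∈ D, (rval x).length = p.n + 1 := by
    intro x hx
    rw [hrvalD x hx]
    simp [hbaselen x hx]
  refine ⟨⟨D, ?_, p.n + 1, rval, hrlen, ?_⟩, ⟨Finset.subset_union_left, ?_, ?_⟩,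
    ⟨Finset.subset_union_right, ?_, ?_⟩⟩
  · intro α hα
    rcases Finset.mem_union.mp hα with h | h
    · exact p.sub α h
    · exact q.sub α h
  · -- injectivity
    intro α hα β hβ hv
    have hlast : aa (ix α) = aa (ix β) := by
      have := congrArg (fun l => l.getD p.n 0) hv
      simp only [hrvalD α hα, hrvalD β hβ] at this
      rwa [List.getD_eq_getElem _ _ (by simp [hbaselen α hα]),
        List.getD_eq_getElem _ _ (by simp [hbaselen β hβ]),
        List.getElem_concat_length (hbaselen α hα).symm,
        List.getElem_concat_length (hbaselen β hβ).symm] at this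
    have hαK : ix α < K := lt_of_lt_of_le (hixlt α hα) (by omega)
    have hβK : ix β < K := lt_of_lt_of_le (hixlt β hβ) (by omega)
    rw [haa] at hlast
    simp only [dif_pos hαK, dif_pos hβK] at hlast
    have : (⟨ix α, hαK⟩ : Fin K) = ⟨ix β, hβK⟩ := hainj hlast
    exact hixinj α hα β hβ (congrArg Fin.val this)
  · -- prefix for p
    intro α hα
    show p.val α <+: rval α
    rw [hrvalD α (Finset.mem_union_left _ hα), hbasep α hα]
    exact List.prefix_append _ _
  · -- patterns for p
    intro α hα β hβ hαβ i hi hR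
    have hαD : α ∈ D := Finset.mem_union_left _ hα
    have hβD : β ∈ D := Finset.mem_union_left _ hβ
    show Rrel σ i (rval α) (rval β)
    rw [hrvalD α hαD, hrvalD β hβD, hbasep α hα, hbasep β hβ]
    exact Rrel_extend hR (hkey i α β hi hαD hβD (Or.inl ⟨hα, hβ, hαβ, hR⟩))
  · -- prefix for q
    intro α hα
    show q.val α <+: rval α
    rw [hrvalD α (Finset.mem_union_right _ hα), hbaseq α hα]
    exact List.prefix_append _ _
  · -- patterns for q
    intro α hα β hβ hαβ i hi hR
    have hαD : α ∈ D := Finset.mem_union_right _ hα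
    have hβD : β ∈ D := Finset.mem_union_right _ hβ
    show Rrel σ i (rval α) (rval β)
    rw [hrvalD α hαD, hrvalD β hβD, hbaseq α hα, hbaseq β hβ]
    exact Rrel_extend hR (hkey i α β (h1 ▸ hi) hαD hβD (Or.inr ⟨hα, hβ, hαβ, hR⟩))
noncomputable def kth (σ : ℕ → ℕ → ℕ) (p : QCond σ) (k : ℕ) : Ordinal :=
  (p.dom.sort (· ≤ ·)).getD k 0

def IsConst (σ : ℕ → ℕ → ℕ) (B : Set (QCond σ)) (k : ℕ) : Prop :=
  ∀ p ∈ B, ∀ q ∈ B, kth σ p k = kth σ q k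

theorem isConst_mono {σ : ℕ → ℕ → ℕ} {B B' : Set (QCond σ)} (h : B' ⊆ B) {k : ℕ}
    (hc : IsConst σ B k) : IsConst σ B' k := fun p hp q hq => hc p (h hp) q (h hq)

theorem unc_nonempty {X : Type*} {s : Set X} (h : ¬ s.Countable) : s.Nonempty :=
  Set.nonempty_iff_ne_empty.mpr (fun he => h (he ▸ Set.countable_empty))

theorem unc_diff {X : Type*} {s t : Set X} (hs : ¬ s.Countable) (ht : t.Countable) :
    ¬ (s \ t).Countable := fun hd =>
  hs ((hd.union ht).mono (fun x hx => by
    by_cases hxt : x ∈ t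
    · exact Set.mem_union_right _ hxt
    · exact Set.mem_union_left _ ⟨hx, hxt⟩))

theorem fib {γ : Type} [Countable γ] {X : Type*} {s : Set X} (h : ¬ s.Countable)
    (f : X → γ) : ∃ b, ¬ {p ∈ s | f p = b}.Countable := by
  by_contra h'
  push_neg at h'
  apply h
  refine (Set.countable_iUnion h').mono (fun x hx => Set.mem_iUnion.mpr ⟨f x, ?_⟩)
  exact ⟨hx, rfl⟩

open scoped Classical in
theorem refineLem (σ : ℕ → ℕ → ℕ) (N : ℕ) : ∀ (m : ℕ) (B : Set (QCond σ)),
    ¬ B.Countable →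
    ((Finset.range N).filter (fun k => ¬ IsConst σ B k)).card ≤ m →
    (∀ k, N ≤ k → IsConst σ B k) →
    ∃ B', B' ⊆ B ∧ ¬ B'.Countable ∧
      ∀ k, IsConst σ B' k ∨ ∀ v, {p ∈ B' | kth σ p k = v}.Countable := by
  classical
  intro m
  induction m with
  | zero =>
    intro B hB hcard hbig
    refine ⟨B, subset_rfl, hB, fun k => Or.inl ?_⟩
    rcases lt_or_ge k N with hk | hk
    · by_contra hnc
      have : k ∈ (Finset.range N).filter (fun k => ¬ IsConst σ B k) :=
        Finset.mem_filter.mpr ⟨Finset.mem_range.mpr hk, hnc⟩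
      have := Finset.card_pos.mpr ⟨k, this⟩
      omega
    · exact hbig k hk
  | succ m ih =>
    intro B hB hcard hbig
    by_cases hall : ∀ k, IsConst σ B k ∨ ∀ v, {p ∈ B | kth σ p k = v}.Countable
    · exact ⟨B, subset_rfl, hB, hall⟩
    · push_neg at hall
      obtain ⟨k, hkc, v, hv⟩ := hall
      set B₂ : Set (QCond σ) := {p ∈ B | kth σ p k = v} with hB₂
      have hsub : B₂ ⊆ B := fun p hp => hp.1
      have hkN : k < N := by
        by_contra hc
        exact hkc (hbig k (le_of_not_gt hc))
      have hconstk : IsConst σ B₂ k := fun p hp q hq => by rw [hp.2, hq.2]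
      have hmem : k ∈ (Finset.range N).filter (fun k => ¬ IsConst σ B k) :=
        Finset.mem_filter.mpr ⟨Finset.mem_range.mpr hkN, hkc⟩
      have hsubset : (Finset.range N).filter (fun k' => ¬ IsConst σ B₂ k') ⊆
          ((Finset.range N).filter (fun k' => ¬ IsConst σ B k')).erase k := by
        intro k' hk'
        rcases Finset.mem_filter.mp hk' with ⟨hr, hnc⟩
        refine Finset.mem_erase.mpr ⟨?_, Finset.mem_filter.mpr ⟨hr, ?_⟩⟩
        · rintro rfl; exact hnc hconstk
        · exact fun hc => hnc (isConst_mono hsub hc)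
      have hcard2 : ((Finset.range N).filter (fun k' => ¬ IsConst σ B₂ k')).card ≤ m := by
        have h1 := Finset.card_le_card hsubset
        have h2 := Finset.card_erase_of_mem hmem
        omega
      obtain ⟨B', h1, h2, h3⟩ := ih B₂ hv hcard2
        (fun k' hk' => isConst_mono hsub (hbig k' hk'))
      exact ⟨B', h1.trans hsub, h2, h3⟩

theorem stmt3' (σ : ℕ → ℕ → ℕ)
    (hσ : ∀ N : ℕ, ∀ φ : Fin N → Fin N → ℕ,
      ∃ n : Fin N → ℕ, Function.Injective n ∧
        ∀ i j₀ j₁ : Fin N, φ i j₀ = (j₁ : ℕ) → σ i (n j₀) = n j₁) :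
    ∀ A : Set (QCond σ),
      (∀ p ∈ A, ∀ q ∈ A, p ≠ q → ¬∃ r : QCond σ, QLe σ p r ∧ QLe σ q r) →
      A.Countable := by
  classical
  intro A hA
  by_contra hcnt
  -- Step 1: fix n, card of dom, and the sorted list of values.
  obtain ⟨⟨n₀, N, L⟩, hA₁u⟩ := fib hcnt
    (fun p : QCond σ => ((p.n, p.dom.card, (p.dom.sort (· ≤ ·)).map p.val) : ℕ × ℕ × List (List ℕ)))
  set A₁ : Set (QCond σ) :=
    {p ∈ A | (p.n, p.dom.card, (p.dom.sort (· ≤ ·)).map p.val) = (n₀, N, L)} with hA₁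
  have hA₁A : A₁ ⊆ A := fun p hp => hp.1
  have hpn : ∀ p ∈ A₁, p.n = n₀ := fun p hp => congrArg (fun x => x.1) hp.2
  have hpcard : ∀ p ∈ A₁, p.dom.card = N := fun p hp => congrArg (fun x => x.2.1) hp.2
  have hpL : ∀ p ∈ A₁, (p.dom.sort (· ≤ ·)).map p.val = L :=
    fun p hp => congrArg (fun x => x.2.2) hp.2
  -- basic facts about kth
  have hsortlen : ∀ p ∈ A₁, (p.dom.sort (· ≤ ·)).length = N := by
    intro p hp; rw [Finset.length_sort]; exact hpcard p hp
  have hkth_mem : ∀ p ∈ A₁, ∀ k, k < N → kth σ p k ∈ p.dom := by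
    intro p hp k hk
    have hk' : k < (p.dom.sort (· ≤ ·)).length := by rw [hsortlen p hp]; exact hk
    rw [kth, List.getD_eq_getElem _ _ hk']
    exact (Finset.mem_sort _).mp (List.getElem_mem hk')
  have hmem_kth : ∀ p ∈ A₁, ∀ δ ∈ p.dom, ∃ k, k < N ∧ kth σ p k = δ := by
    intro p hp δ hδ
    have : δ ∈ p.dom.sort (· ≤ ·) := (Finset.mem_sort _).mpr hδ
    obtain ⟨k, hk, he⟩ := List.mem_iff_getElem.mp this
    refine ⟨k, by rw [← hsortlen p hp]; exact hk, ?_⟩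
    rw [kth, List.getD_eq_getElem _ _ hk, he]
  have hkth_inj : ∀ p ∈ A₁, ∀ k k', k < N → k' < N → kth σ p k = kth σ p k' → k = k' := by
    intro p hp k k' hk hk' he
    have h1 : k < (p.dom.sort (· ≤ ·)).length := by rw [hsortlen p hp]; exact hk
    have h2 : k' < (p.dom.sort (· ≤ ·)).length := by rw [hsortlen p hp]; exact hk'
    simp only [kth] at he
    rw [List.getD_eq_getElem _ _ h1, List.getD_eq_getElem _ _ h2] at he
    exact (List.Nodup.getElem_inj_iff (Finset.sort_nodup p.dom (· ≤ ·))).mp he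
  have hval_kth : ∀ p ∈ A₁, ∀ k, k < N → p.val (kth σ p k) = L.getD k [] := by
    intro p hp k hk
    have hk' : k < (p.dom.sort (· ≤ ·)).length := by rw [hsortlen p hp]; exact hk
    have hkL : k < L.length := by
      rw [← hpL p hp, List.length_map]; exact hk'
    calc p.val (kth σ p k) = p.val ((p.dom.sort (· ≤ ·))[k]'hk') := by
          rw [kth, List.getD_eq_getElem _ _ hk']
      _ = ((p.dom.sort (· ≤ ·)).map p.val)[k]'(by rw [List.length_map]; exact hk') :=
          (List.getElem_map _).symm
      _ = L[k]'hkL := List.getElem_of_eq (hpL p hp) _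
      _ = L.getD k [] := (List.getD_eq_getElem _ _ hkL).symm
  -- Step 2: refinement
  have hA₁unc : ¬ A₁.Countable := hA₁u
  have hbig : ∀ k, N ≤ k → IsConst σ A₁ k := by
    intro k hk p hp q hq
    rw [kth, kth, List.getD_eq_default, List.getD_eq_default]
    · rw [hsortlen q hq]; exact hk
    · rw [hsortlen p hp]; exact hk
  obtain ⟨B, hBsub, hBunc, hBP⟩ := refineLem σ N
    (((Finset.range N).filter (fun k => ¬ IsConst σ A₁ k)).card) A₁ hA₁unc le_rfl hbig
  have hBA₁ : B ⊆ A₁ := hBsub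
  -- Step 3: pick α
  obtain ⟨α, hαB⟩ := unc_nonempty hBunc
  set γ : Ordinal := α.dom.sup id with hγ
  have hγbound : ∀ z ∈ α.dom, z ≤ γ := fun z hz => Finset.le_sup (f := id) hz
  have hγlt : γ < omega1 := by
    rcases α.dom.eq_empty_or_nonempty with he | hne
    · rw [hγ, he, Finset.sup_empty]
      rw [Ordinal.bot_eq_zero, omega1, Cardinal.lt_ord, Ordinal.card_zero]
      exact lt_trans Cardinal.aleph0_pos Cardinal.aleph0_lt_aleph_one
    · obtain ⟨b, hb, hbe⟩ := Finset.exists_mem_eq_sup _ hne (id : Ordinal → Ordinal)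
      rw [hγ, hbe]
      exact α.sub b hb
  -- Step 4: the countable bad set
  set C₂ : Set (QCond σ) := {p ∈ B | ∃ k, ¬ IsConst σ B k ∧ kth σ p k ≤ γ} with hC₂
  have hC₂c : C₂.Countable := by
    have hIic : (Set.Iic γ).Countable := countable_Iic_of_lt_omega1 hγlt
    haveI : Countable (Set.Iic γ) := hIic.to_subtype
    have hsub : C₂ ⊆ ⋃ kv : ℕ × (Set.Iic γ),
        {p ∈ B | ¬ IsConst σ B kv.1 ∧ kth σ p kv.1 = (kv.2 : Ordinal)} := by
      rintro p ⟨hp, k, hkc, hkγ⟩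
      refine Set.mem_iUnion.mpr ⟨(k, ⟨kth σ p k, hkγ⟩), ?_⟩
      exact ⟨hp, hkc, rfl⟩
    refine (Set.countable_iUnion ?_).mono hsub
    rintro ⟨k, v⟩
    rcases hBP k with hc | hc
    · refine Set.countable_empty.mono ?_
      rintro p ⟨_, hnc, _⟩
      exact absurd hc hnc
    · refine (hc (v : Ordinal)).mono ?_
      rintro p ⟨hpB, _, hkv⟩
      exact ⟨hpB, hkv⟩
  -- Step 5: pick β
  obtain ⟨β, hβdiff⟩ := unc_nonempty (unc_diff hBunc (hC₂c.union (Set.countable_singleton α)))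
  have hβB : β ∈ B := hβdiff.1
  have hβC₂ : β ∉ C₂ := fun h => hβdiff.2 (Set.mem_union_left _ h)
  have hαβ : α ≠ β := fun h => hβdiff.2 (Set.mem_union_right _ (h ▸ rfl))
  have hαA₁ : α ∈ A₁ := hBA₁ hαB
  have hβA₁ : β ∈ A₁ := hBA₁ hβB
  -- Step 6: verify the hypotheses of the amalgamation lemma
  have H1 : α.n = β.n := by rw [hpn α hαA₁, hpn β hβA₁]
  have H3 : ∀ x ∈ β.dom, x ∉ α.dom → ∀ z ∈ α.dom, z < x := by
    intro x hx hxα z hz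
    obtain ⟨k, hkN, hke⟩ := hmem_kth β hβA₁ x hx
    have hknc : ¬ IsConst σ B k := by
      intro hc
      apply hxα
      rw [← hke, hc β hβB α hαB]
      exact hkth_mem α hαA₁ k hkN
    have : ¬ kth σ β k ≤ γ := by
      intro hle
      exact hβC₂ ⟨hβB, k, hknc, hle⟩
    rw [hke] at this
    exact lt_of_le_of_lt (hγbound z hz) (lt_of_not_ge this)
  have H2 : ∀ δ, δ ∈ α.dom → δ ∈ β.dom → α.val δ = β.val δ := by
    intro δ hδα hδβ
    obtain ⟨k, hkN, hke⟩ := hmem_kth α hαA₁ δ hδα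
    obtain ⟨k', hk'N, hk'e⟩ := hmem_kth β hβA₁ δ hδβ
    have hk'c : IsConst σ B k' := by
      by_contra hnc
      apply hβC₂
      refine ⟨hβB, k', hnc, ?_⟩
      rw [hk'e]
      exact hγbound δ hδα
    have : kth σ α k' = δ := by rw [← hk'e, hk'c α hαB β hβB]
    have hkk' : k = k' := hkth_inj α hαA₁ k k' hkN hk'N (by rw [hke, this])
    have e1 : α.val δ = L.getD k [] := by rw [← hke]; exact hval_kth α hαA₁ k hkN
    have e2 : β.val δ = L.getD k' [] := by rw [← hk'e]; exact hval_kth β hβA₁ k' hk'N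
    rw [e1, e2, hkk']
  obtain ⟨r, hr1, hr2⟩ := amalg σ hσ α β H1 H2 H3
  exact hA α (hA₁A hαA₁) β (hA₁A hβA₁) hαβ ⟨r, hr1, hr2⟩

/-- Q satisfies the countable chain condition: every antichain is
countable. (Here σ is assumed to satisfy the absorption property (*).) -/
theorem stmt3 (σ : ℕ → ℕ → ℕ)
    (hσ : ∀ N : ℕ, ∀ φ : Fin N → Fin N → ℕ,
      ∃ n : Fin N → ℕ, Function.Injective n ∧
        ∀ i j₀ j₁ : Fin N, φ i j₀ = (j₁ : ℕ) → σ i (n j₀) = n j₁) :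
    ∀ A : Set (QCond σ),
      (∀ p ∈ A, ∀ q ∈ A, p ≠ q → ¬∃ r : QCond σ, QLe σ p r ∧ QLe σ q r) →
      A.Countable := by
  exact stmt3' σ hσ
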